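/- Let q, a, b, c, d be integers with q ≥ 2, q square-free, (b ≠ 0 or d ≠ 0), and (a + b*√q)*(c + d*√q) = 1. Then (a ≥ 1 and b ≥ 1) or (a ≤ -1 and b ≤ -1) or (c ≥ 1 and d ≥ 1) or (c ≤ -1 and d ≤ -1). -/

import Mathlib

/-- Key lemma: if `a + b*s > 1` and the norm `a^2 - q*b^2 = ±1`, with `s > 0`,
`s^2 = q`, then `a ≥ 1` and `b ≥ 1`. -/
lemma sqrt_unit_key (q a b : ℤ) (s : ℝ) (hspos : 0 < s) (hs2 : s ^ 2 = (q : ℝ))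
    (hN : a ^ 2 - q * b ^ 2 = 1 ∨ a ^ 2 - q * b ^ 2 = -1)
    (hu : 1 < (a : ℝ) + (b : ℝ) * s) : 1 ≤ a ∧ 1 ≤ b := by
  have hub : ((a : ℝ) + b * s) * ((a : ℝ) - b * s) = ((a ^ 2 - q * b ^ 2 : ℤ) : ℝ) := by
    push_cast
    linear_combination (-(b : ℝ) ^ 2) * hs2
  have h1 : |((a : ℝ) + b * s) * ((a : ℝ) - b * s)| = 1 := by
    rcases hN with h1 | h1 <;> rw [h1] at hub <;> rw [hub] <;> norm_num
  rw [abs_mul] at h1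
  have hua : |(a : ℝ) + b * s| = (a : ℝ) + b * s := abs_of_pos (by linarith)
  rw [hua] at h1
  have habs : |(a : ℝ) - b * s| < 1 := by
    by_contra hc
    push_neg at hc
    nlinarith
  rw [abs_lt] at habs
  have ha : 0 < a := by
    have : (0 : ℝ) < (a : ℝ) := by linarith
    exact_mod_cast this
  have hb : 0 < b := by
    have hbs : (0 : ℝ) < (b : ℝ) * s := by linarith
    by_contra hc
    push_neg at hc
    have : ((b : ℤ) : ℝ) ≤ 0 := by exact_mod_cast hc
    nlinarith
  omega

theorem stmt_1 (q a b c d : ℤ) (hq : 2 ≤ q) (hsf : Squarefree q)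
    (hbd : b ≠ 0 ∨ d ≠ 0)
    (h : ((a : ℝ) + (b : ℝ) * Real.sqrt (q : ℝ)) * ((c : ℝ) + (d : ℝ) * Real.sqrt (q : ℝ)) = 1) :
    (1 ≤ a ∧ 1 ≤ b) ∨ (a ≤ -1 ∧ b ≤ -1) ∨ (1 ≤ c ∧ 1 ≤ d) ∨ (c ≤ -1 ∧ d ≤ -1) := by
  set s := Real.sqrt (q : ℝ) with hsdef
  have hq2 : (2 : ℝ) ≤ (q : ℝ) := by exact_mod_cast hq
  have hs2 : s ^ 2 = (q : ℝ) := Real.sq_sqrt (by linarith)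
  have hspos : 0 < s := Real.sqrt_pos.mpr (by linarith)
  have hq' : (q : ℝ) = s ^ 2 := hs2.symm
  -- q is not a square
  have hnsq : ¬IsSquare q := by
    rintro ⟨r, hr⟩
    have : IsUnit r := hsf r (by rw [hr])
    have : r = 1 ∨ r = -1 := Int.isUnit_iff.mp this
    rcases this with rfl | rfl <;> omega
  have hirr : Irrational s := irrational_sqrt_intCast_iff.mpr ⟨hnsq, by omega⟩
  -- extract the two integer equations
  have key : ((a * c + b * d * q : ℤ) : ℝ) + ((a * d + b * c : ℤ) : ℝ) * s = 1 := by
    push_cast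
    linear_combination h - (b : ℝ) * d * hs2
  have e2 : a * d + b * c = 0 := by
    by_contra hn
    have hirr2 : Irrational (((a * c + b * d * q : ℤ) : ℝ) + ((a * d + b * c : ℤ) : ℝ) * s) :=
      (hirr.intCast_mul hn).intCast_add _
    exact hirr2.ne_int 1 (by rw [key]; norm_num)
  have e1 : a * c + b * d * q = 1 := by
    have : ((a * c + b * d * q : ℤ) : ℝ) = 1 := by
      rw [e2] at key; push_cast at key ⊢; linarith
    exact_mod_cast this
  -- b and d are both nonzero
  have hbne : b ≠ 0 := by
    rintro rfl
    simp only [zero_mul, mul_zero, add_zero, zero_add] at e1 e2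
    have ha : a ≠ 0 := by rintro rfl; simp at e1
    have hd : d = 0 := by
      rcases mul_eq_zero.mp e2 with h' | h'
      · exact absurd h' ha
      · exact h'
    rcases hbd with h' | h'
    · exact h' rfl
    · exact h' hd
  have hdne : d ≠ 0 := by
    rintro rfl
    simp only [mul_zero, zero_mul, add_zero, zero_add] at e1 e2
    have hc : c ≠ 0 := by rintro rfl; simp at e1
    rcases mul_eq_zero.mp e2 with h' | h'
    · exact hbne h'
    · exact absurd h' hc
  -- conjugate product
  have h' : ((a : ℝ) - b * s) * ((c : ℝ) - d * s) = 1 := by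
    have e1' : (a : ℝ) * c + (b : ℝ) * d * (q : ℝ) = 1 := by exact_mod_cast e1
    have e2' : (a : ℝ) * d + (b : ℝ) * c = 0 := by exact_mod_cast e2
    rw [hq'] at e1'
    linear_combination e1' - s * e2'
  -- product of norms is 1
  have hNN : (a ^ 2 - q * b ^ 2) * (c ^ 2 - q * d ^ 2) = 1 := by
    have : ((a ^ 2 - q * b ^ 2 : ℤ) : ℝ) * ((c ^ 2 - q * d ^ 2 : ℤ) : ℝ) = 1 := by
      push_cast
      rw [hq']
      linear_combination ((a : ℝ) - b * s) * ((c : ℝ) - d * s) * h + h'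
    exact_mod_cast this
  have hN1 : a ^ 2 - q * b ^ 2 = 1 ∨ a ^ 2 - q * b ^ 2 = -1 := by
    rcases Int.mul_eq_one_iff_eq_one_or_neg_one.mp hNN with ⟨h1, _⟩ | ⟨h1, _⟩
    · exact Or.inl h1
    · exact Or.inr h1
  have hN2 : c ^ 2 - q * d ^ 2 = 1 ∨ c ^ 2 - q * d ^ 2 = -1 := by
    rcases Int.mul_eq_one_iff_eq_one_or_neg_one.mp hNN with ⟨_, h1⟩ | ⟨_, h1⟩
    · exact Or.inl h1
    · exact Or.inr h1
  -- u ≠ ±1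
  have hirru : Irrational ((a : ℝ) + (b : ℝ) * s) := (hirr.intCast_mul hbne).intCast_add a
  have hune1 : (a : ℝ) + (b : ℝ) * s ≠ 1 := by
    intro heq; exact hirru.ne_int 1 (by rw [heq]; norm_num)
  have hunem1 : (a : ℝ) + (b : ℝ) * s ≠ -1 := by
    intro heq; exact hirru.ne_int (-1) (by rw [heq]; norm_num)
  rcases lt_trichotomy ((a : ℝ) + (b : ℝ) * s) 1 with hlt | heq | hgt
  · rcases lt_trichotomy ((a : ℝ) + (b : ℝ) * s) (-1) with hlt2 | heq2 | hgt2
    · -- u < -1 : apply key to (-a, -b)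
      have := sqrt_unit_key q (-a) (-b) s hspos hs2
        (by rcases hN1 with h1 | h1; exacts [Or.inl (by linarith), Or.inr (by linarith)])
        (by push_cast; linarith)
      right; left; omega
    · exact absurd heq2 hunem1
    · -- |u| < 1, so |v| > 1
      have huabs : |(a : ℝ) + (b : ℝ) * s| < 1 := abs_lt.mpr ⟨hgt2, hlt⟩
      have hvabs : 1 < |(c : ℝ) + (d : ℝ) * s| := by
        have habs1 : |(a : ℝ) + (b : ℝ) * s| * |(c : ℝ) + (d : ℝ) * s| = 1 := by
          rw [← abs_mul, h]; norm_num
        by_contra hc2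
        push_neg at hc2
        nlinarith [abs_nonneg ((a : ℝ) + (b : ℝ) * s), abs_nonneg ((c : ℝ) + (d : ℝ) * s)]
      rcases lt_abs.mp hvabs with hv | hv
      · have := sqrt_unit_key q c d s hspos hs2 hN2 hv
        right; right; left; exact this
      · have := sqrt_unit_key q (-c) (-d) s hspos hs2
          (by rcases hN2 with h1 | h1; exacts [Or.inl (by linarith), Or.inr (by linarith)])
          (by push_cast; linarith)
        right; right; right; omega
  · exact absurd heq hune1
  · left; exact sqrt_unit_key q a b s hspos hs2 hN1 hgt
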